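/- Let X be a T1 topological space, let 𝒜 ⊆ ℘(X) be an ideal-base consisting of proper subsets of X with ⋃𝒜 = X, and let ℬ ⊆ ℘(X) satisfy ⋃ℬ = X. In the generalized point-open game, in round n One picks A_n ∈ 𝒜 and Two responds with an open set U_n ⊆ X with A_n ⊆ U_n and U_n ≠ X. Then: (a) One has a strategy guaranteeing that every B ∈ ℬ is contained in some U_n if and only if One has a strategy guaranteeing that the set 𝒰 = {U_n : n ∈ ω} is infinite and for every B ∈ ℬ the set {U ∈ 𝒰 : B ⊄ U} is finite; (b) the same equivalence holds for predetermined strategies of One (strategies depending only on the round number). -/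

import Mathlib

open Set

/-- `𝒜` is an ideal-base: any two members have their union contained in a third member. -/
def IdealBase {X : Type*} (𝒜 : Set (Set X)) : Prop :=
  ∀ A₁ ∈ 𝒜, ∀ A₂ ∈ 𝒜, ∃ A₃ ∈ 𝒜, A₁ ∪ A₂ ⊆ A₃

/-- A run of the generalized point-open game compatible with One's strategy
`σ : List (Set X) → Set X` (taking Two's previous responses to One's next move):
Two's responses `U n` are open, contain One's move, and are proper. -/
def POLegalRun {X : Type*} [TopologicalSpace X] (σ : List (Set X) → Set X)
    (U : ℕ → Set X) : Prop :=
  ∀ n : ℕ, IsOpen (U n) ∧ σ (List.ofFn fun i : Fin n => U i) ⊆ U n ∧ U n ≠ univ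

section Aux

variable {X : Type*}

/-- From an ideal-base, a member containing a base member and everything in a list. -/
lemma idealBase_list {𝒜 : Set (Set X)} (h : IdealBase 𝒜) :
    ∀ (L : List (Set X)), ∀ A₀ ∈ 𝒜, (∀ A ∈ L, A ∈ 𝒜) →
      ∃ A ∈ 𝒜, A₀ ⊆ A ∧ ∀ B ∈ L, B ⊆ A := by
  intro L
  induction L with
  | nil => exact fun A₀ h₀ _ => ⟨A₀, h₀, subset_rfl, by simp⟩
  | cons C L ih =>
    intro A₀ h₀ hL
    obtain ⟨A, hA, hA₀, hAL⟩ := ih A₀ h₀ (fun B hB => hL B (List.mem_cons_of_mem _ hB))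
    obtain ⟨A', hA', hsub⟩ := h A hA C (hL C List.mem_cons_self)
    refine ⟨A', hA', hA₀.trans (subset_union_left.trans hsub), ?_⟩
    intro B hB
    rcases List.mem_cons.1 hB with rfl | hB
    · exact subset_union_right.trans hsub
    · exact (hAL B hB).trans (subset_union_left.trans hsub)

lemma ofFn_eq_map {α : Type*} (n : ℕ) (f : ℕ → α) :
    List.ofFn (fun i : Fin n => f i) = (List.range n).map f := by
  apply List.ext_getElem <;> simp

lemma strictMono_range_sublist {e : ℕ → ℕ} (he : StrictMono e) (k : ℕ) :
    ((List.range k).map e).Sublist (List.range (e k)) := by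
  induction k with
  | zero => simp
  | succ k ih =>
    have h1 : (List.range (k + 1)).map e = (List.range k).map e ++ [e k] := by
      rw [List.range_succ, List.map_append]; simp
    have h2 : (List.range (e k + 1)).Sublist (List.range (e (k + 1))) :=
      List.range_sublist.2 (he (Nat.lt_succ_self k))
    rw [h1]
    refine List.Sublist.trans ?_ h2
    rw [List.range_succ]
    exact ih.append_right _

lemma ofFn_sublist {α : Type*} (U : ℕ → α) {e : ℕ → ℕ} (he : StrictMono e) (k : ℕ) :
    (List.ofFn fun i : Fin k => U (e i)).Sublist (List.ofFn fun i : Fin (e k) => U i) := by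
  rw [ofFn_eq_map (e k) U,
    show (List.ofFn fun i : Fin k => U (e i)) = ((List.range k).map e).map U by
      rw [List.map_map]; exact ofFn_eq_map k (U ∘ e)]
  exact (strictMono_range_sublist he k).map U

/-- Pigeonhole: a sequence with finite range has an infinite fiber. -/
lemma exists_infinite_fiber_of_finite_range {α : Type*} {U : ℕ → α}
    (hfin : (Set.range U).Finite) : ∃ V, {n : ℕ | U n = V}.Infinite := by
  haveI : Finite ↥(Set.range U) := hfin.to_subtype
  obtain ⟨y, hy⟩ := Finite.exists_infinite_fiber (Set.rangeFactorization U)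
  refine ⟨(y : α), ?_⟩
  rw [Set.infinite_coe_iff] at hy
  refine hy.mono ?_
  intro n hn
  simpa [Set.rangeFactorization, Subtype.ext_iff] using hn

end Aux

/-- For a T1 space `X`, an ideal-base `𝒜` of proper subsets with `⋃𝒜 = X`,
and `ℬ` with `⋃ℬ = X`, in the generalized point-open game (One plays `A_n ∈ 𝒜`, Two
responds with a proper open `U_n ⊇ A_n`):
(a) One has a strategy forcing every `B ∈ ℬ` inside some `U_n` iff One has a strategy
forcing `{U_n : n}` to be infinite with `{U ∈ 𝒰 : B ⊄ U}` finite for every `B ∈ ℬ`;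
(b) likewise for predetermined strategies. -/
theorem stmt8 {X : Type*} [TopologicalSpace X] [T1Space X]
    (𝒜 ℬ : Set (Set X)) (hIB : IdealBase 𝒜)
    (hproper : ∀ A ∈ 𝒜, A ≠ univ) (hUA : ⋃₀ 𝒜 = univ) (hUB : ⋃₀ ℬ = univ) :
    ((∃ σ : List (Set X) → Set X, (∀ l, σ l ∈ 𝒜) ∧
        ∀ U : ℕ → Set X, POLegalRun σ U → ∀ B ∈ ℬ, ∃ n, B ⊆ U n) ↔
      (∃ σ : List (Set X) → Set X, (∀ l, σ l ∈ 𝒜) ∧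
        ∀ U : ℕ → Set X, POLegalRun σ U →
          (Set.range U).Infinite ∧ ∀ B ∈ ℬ, {V ∈ Set.range U | ¬ B ⊆ V}.Finite)) ∧
    ((∃ p : ℕ → Set X, (∀ n, p n ∈ 𝒜) ∧
        ∀ U : ℕ → Set X, (∀ n, IsOpen (U n) ∧ p n ⊆ U n ∧ U n ≠ univ) →
          ∀ B ∈ ℬ, ∃ n, B ⊆ U n) ↔
      (∃ p : ℕ → Set X, (∀ n, p n ∈ 𝒜) ∧
        ∀ U : ℕ → Set X, (∀ n, IsOpen (U n) ∧ p n ⊆ U n ∧ U n ≠ univ) →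
          (Set.range U).Infinite ∧ ∀ B ∈ ℬ, {V ∈ Set.range U | ¬ B ⊆ V}.Finite)) := by
  constructor
  · -- (a) full-information strategies
    constructor
    · -- forward
      rintro ⟨σ, hσA, hσwin⟩
      have hch : ∀ l : List (Set X), ∃ A ∈ 𝒜, ∀ l' ∈ l.sublists, σ l' ⊆ A := by
        intro l
        obtain ⟨A, hA, -, hAL⟩ := idealBase_list hIB (l.sublists.map σ) (σ l) (hσA l)
          (by intro B hB; obtain ⟨l', -, rfl⟩ := List.mem_map.1 hB; exact hσA l')
        exact ⟨A, hA, fun l' hl' => hAL _ (List.mem_map_of_mem hl')⟩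
      choose τ hτA hτsub using hch
      refine ⟨τ, hτA, ?_⟩
      intro U hU
      -- key: the restriction of U to any infinite index set is a legal σ-run
      have key : ∀ S : Set ℕ, S.Infinite →
          POLegalRun σ (fun k => U (Nat.nth (· ∈ S) k)) ∧
          ∀ k, Nat.nth (· ∈ S) k ∈ S := by
        intro S hS
        have he : StrictMono (Nat.nth (· ∈ S)) := Nat.nth_strictMono hS
        refine ⟨?_, fun k => Nat.nth_mem_of_infinite hS k⟩
        intro k
        obtain ⟨hop, hsub, hne⟩ := hU (Nat.nth (· ∈ S) k)
        refine ⟨hop, ?_, hne⟩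
        refine subset_trans ?_ hsub
        exact hτsub _ _ (List.mem_sublists.2 (ofFn_sublist U he k))
      have hBfin : ∀ B ∈ ℬ, {n : ℕ | ¬ B ⊆ U n}.Finite := by
        intro B hBm
        by_contra hinf
        obtain ⟨hleg, hmem⟩ := key _ hinf
        obtain ⟨k, hk⟩ := hσwin _ hleg B hBm
        exact hmem k hk
      have hrange : (Set.range U).Infinite := by
        by_contra hfin
        rw [Set.not_infinite] at hfin
        obtain ⟨V, hV⟩ := exists_infinite_fiber_of_finite_range hfin
        obtain ⟨hleg, hmem⟩ := key _ hV
        have hVne : V ≠ univ := by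
          have := (hU (Nat.nth (· ∈ {n : ℕ | U n = V}) 0)).2.2
          rwa [hmem 0] at this
        refine hVne (univ_subset_iff.1 ?_)
        rw [← hUB]
        rintro x ⟨B, hBm, hxB⟩
        obtain ⟨k, hk⟩ := hσwin _ hleg B hBm
        have hkV : U (Nat.nth (· ∈ {n : ℕ | U n = V}) k) = V := hmem k
        exact hkV ▸ hk hxB
      refine ⟨hrange, fun B hBm => ?_⟩
      refine (((hBfin B hBm).image U).subset ?_)
      rintro V ⟨⟨n, rfl⟩, hV⟩
      exact ⟨n, hV, rfl⟩
    · -- backward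
      rintro ⟨σ, hσA, hσwin⟩
      refine ⟨σ, hσA, ?_⟩
      intro U hU B hBm
      obtain ⟨hinf, hfin⟩ := hσwin U hU
      obtain ⟨V, hVr, hVn⟩ := (hinf.diff (hfin B hBm)).nonempty
      obtain ⟨n, rfl⟩ := hVr
      refine ⟨n, ?_⟩
      by_contra h
      exact hVn ⟨⟨n, rfl⟩, h⟩
  · -- (b) predetermined strategies
    constructor
    · -- forward
      rintro ⟨p, hpA, hpwin⟩
      have hch : ∀ n : ℕ, ∃ A ∈ 𝒜, ∀ i ≤ n, p i ⊆ A := by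
        intro n
        obtain ⟨A, hA, -, hAL⟩ := idealBase_list hIB ((List.range (n + 1)).map p) (p 0) (hpA 0)
          (by intro B hB; obtain ⟨i, -, rfl⟩ := List.mem_map.1 hB; exact hpA i)
        exact ⟨A, hA, fun i hi =>
          hAL _ (List.mem_map_of_mem (List.mem_range.2 (Nat.lt_succ_of_le hi)))⟩
      choose q hqA hqsub using hch
      refine ⟨q, hqA, ?_⟩
      intro U hU
      have key : ∀ S : Set ℕ, S.Infinite →
          (∀ k, IsOpen (U (Nat.nth (· ∈ S) k)) ∧ p k ⊆ U (Nat.nth (· ∈ S) k) ∧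
            U (Nat.nth (· ∈ S) k) ≠ univ) ∧
          ∀ k, Nat.nth (· ∈ S) k ∈ S := by
        intro S hS
        have he : StrictMono (Nat.nth (· ∈ S)) := Nat.nth_strictMono hS
        refine ⟨?_, fun k => Nat.nth_mem_of_infinite hS k⟩
        intro k
        obtain ⟨hop, hsub, hne⟩ := hU (Nat.nth (· ∈ S) k)
        exact ⟨hop, (hqsub _ k he.le_apply).trans hsub, hne⟩
      have hBfin : ∀ B ∈ ℬ, {n : ℕ | ¬ B ⊆ U n}.Finite := by
        intro B hBm
        by_contra hinf
        obtain ⟨hleg, hmem⟩ := key _ hinf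
        obtain ⟨k, hk⟩ := hpwin _ hleg B hBm
        exact hmem k hk
      have hrange : (Set.range U).Infinite := by
        by_contra hfin
        rw [Set.not_infinite] at hfin
        obtain ⟨V, hV⟩ := exists_infinite_fiber_of_finite_range hfin
        obtain ⟨hleg, hmem⟩ := key _ hV
        have hVne : V ≠ univ := by
          have := (hU (Nat.nth (· ∈ {n : ℕ | U n = V}) 0)).2.2
          rwa [hmem 0] at this
        refine hVne (univ_subset_iff.1 ?_)
        rw [← hUB]
        rintro x ⟨B, hBm, hxB⟩
        obtain ⟨k, hk⟩ := hpwin _ hleg B hBm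
        have hkV : U (Nat.nth (· ∈ {n : ℕ | U n = V}) k) = V := hmem k
        exact hkV ▸ hk hxB
      refine ⟨hrange, fun B hBm => ?_⟩
      refine (((hBfin B hBm).image U).subset ?_)
      rintro V ⟨⟨n, rfl⟩, hV⟩
      exact ⟨n, hV, rfl⟩
    · -- backward
      rintro ⟨p, hpA, hpwin⟩
      refine ⟨p, hpA, ?_⟩
      intro U hU B hBm
      obtain ⟨hinf, hfin⟩ := hpwin U hU
      obtain ⟨V, hVr, hVn⟩ := (hinf.diff (hfin B hBm)).nonempty
      obtain ⟨n, rfl⟩ := hVr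
      refine ⟨n, ?_⟩
      by_contra h
      exact hVn ⟨⟨n, rfl⟩, h⟩
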